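/- Let λ ≥ 0, let v ∈ ℝ^d be a unit vector, set Σ = I_d + λ v vᵀ, and let x ~ N(0, Σ). Let w, v_weak ∈ ℝ^d be unit vectors and let f : ℝ → ℝ be differentiable with |f'(x)| ≤ M₁ for all x. Define g := (f(⟨w, x⟩) − f(⟨v_weak, x⟩))·f'(⟨w, x⟩)·x. Then E[‖g‖²] ≤ M₁⁴·( 4d(1+λ) + 4λ(1+λ) + 8(1+λ)² ). -/

import Mathlib

open MeasureTheory ProbabilityTheory Matrix



open MeasureTheory Real Set Filter

lemma pow_eq_rpow (x : ℝ) (n : ℕ) : x ^ (n : ℝ) = x ^ n := Real.rpow_natCast x n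

lemma intOn_pow_exp {b : ℝ} (hb : 0 < b) (n : ℕ) :
    IntegrableOn (fun x : ℝ => x ^ n * Real.exp (-b * x ^ 2)) (Ioi 0) := by
  have := integrableOn_rpow_mul_exp_neg_mul_sq hb (s := (n : ℝ)) (by exact lt_of_lt_of_le neg_one_lt_zero (Nat.cast_nonneg n))
  simpa [pow_eq_rpow] using this

lemma tendsto_pow_exp {b : ℝ} (hb : 0 < b) (n : ℕ) :
    Tendsto (fun x : ℝ => x ^ n * Real.exp (-b * x ^ 2)) atTop (nhds 0) := by
  have h := rpow_mul_exp_neg_mul_sq_isLittleO_exp_neg hb (n : ℝ)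
  simp only [pow_eq_rpow] at h
  refine h.isBigO.trans_tendsto ?_
  have : Tendsto (fun x : ℝ => -(1/2) * x) atTop atBot := by
    apply Tendsto.const_mul_atTop_of_neg (by norm_num) tendsto_id
  exact Real.tendsto_exp_atBot.comp this

lemma gauss_m2_Ioi {b : ℝ} (hb : 0 < b) :
    ∫ x in Ioi (0:ℝ), x ^ 2 * Real.exp (-b * x ^ 2) = Real.sqrt (π / b) / (4 * b) := by
  have hderiv : ∀ x ∈ Ici (0:ℝ), HasDerivAt (fun x : ℝ => x * Real.exp (-b * x ^ 2))
      (Real.exp (-b * x ^ 2) - 2 * b * (x ^ 2 * Real.exp (-b * x ^ 2))) x := by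
    intro x _
    have h1 : HasDerivAt (fun x : ℝ => -b * x ^ 2) (-b * (2 * x)) x := by
      simpa using ((hasDerivAt_pow 2 x).const_mul (-b))
    have : HasDerivAt (fun x : ℝ => x * Real.exp (-b * x ^ 2)) _ x := (hasDerivAt_id x).mul h1.exp
    convert this using 1
    simp only [id]
    ring
  have hint : IntegrableOn (fun x : ℝ => Real.exp (-b * x ^ 2)
      - 2 * b * (x ^ 2 * Real.exp (-b * x ^ 2))) (Ioi 0) :=
    ((integrable_exp_neg_mul_sq hb).integrableOn).sub ((intOn_pow_exp hb 2).const_mul _)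
  have htend : Tendsto (fun x : ℝ => x * Real.exp (-b * x ^ 2)) atTop (nhds 0) := by
    simpa using tendsto_pow_exp hb 1
  have key := integral_Ioi_of_hasDerivAt_of_tendsto' hderiv hint htend
  simp only [mul_zero, Real.exp_zero, zero_pow, ne_eq, OfNat.ofNat_ne_zero,
    not_false_eq_true, zero_mul, sub_zero, mul_one] at key
  rw [integral_sub ((integrable_exp_neg_mul_sq hb).integrableOn)
    ((intOn_pow_exp hb 2).const_mul _), integral_gaussian_Ioi b,
    MeasureTheory.integral_const_mul] at key
  have h4b : (4:ℝ) * b ≠ 0 := by positivity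
  field_simp at key ⊢
  linarith


lemma gauss_m4_Ioi {b : ℝ} (hb : 0 < b) :
    ∫ x in Ioi (0:ℝ), x ^ 4 * Real.exp (-b * x ^ 2) = 3 * Real.sqrt (π / b) / (8 * b ^ 2) := by
  have hderiv : ∀ x ∈ Ici (0:ℝ), HasDerivAt (fun x : ℝ => x ^ 3 * Real.exp (-b * x ^ 2))
      (3 * (x ^ 2 * Real.exp (-b * x ^ 2)) - 2 * b * (x ^ 4 * Real.exp (-b * x ^ 2))) x := by
    intro x _
    have h1 : HasDerivAt (fun x : ℝ => -b * x ^ 2) (-b * (2 * x)) x := by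
      simpa using ((hasDerivAt_pow 2 x).const_mul (-b))
    have : HasDerivAt (fun x : ℝ => x ^ 3 * Real.exp (-b * x ^ 2)) _ x := (hasDerivAt_pow 3 x).mul h1.exp
    convert this using 1
    ring
  have hint : IntegrableOn (fun x : ℝ => 3 * (x ^ 2 * Real.exp (-b * x ^ 2))
      - 2 * b * (x ^ 4 * Real.exp (-b * x ^ 2))) (Ioi 0) :=
    ((intOn_pow_exp hb 2).const_mul _).sub ((intOn_pow_exp hb 4).const_mul _)
  have htend : Tendsto (fun x : ℝ => x ^ 3 * Real.exp (-b * x ^ 2)) atTop (nhds 0) :=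
    tendsto_pow_exp hb 3
  have key := integral_Ioi_of_hasDerivAt_of_tendsto' hderiv hint htend
  simp only [mul_zero, Real.exp_zero, zero_pow, ne_eq, OfNat.ofNat_ne_zero,
    not_false_eq_true, zero_mul, sub_zero, mul_one] at key
  rw [integral_sub ((intOn_pow_exp hb 2).const_mul _) ((intOn_pow_exp hb 4).const_mul _),
    MeasureTheory.integral_const_mul, MeasureTheory.integral_const_mul, gauss_m2_Ioi hb] at key
  have h2 : (8:ℝ) * b ^ 2 ≠ 0 := by positivity
  field_simp at key ⊢
  linarith

lemma gauss_m4 {b : ℝ} (hb : 0 < b) :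
    ∫ x : ℝ, x ^ 4 * Real.exp (-b * x ^ 2) = 3 * Real.sqrt (π / b) / (4 * b ^ 2) := by
  have h := integral_comp_abs (f := fun x : ℝ => x ^ 4 * Real.exp (-b * x ^ 2))
  simp only [show ∀ x : ℝ, |x| ^ 4 * Real.exp (-b * |x| ^ 2) = x ^ 4 * Real.exp (-b * x ^ 2) from
    fun x => by rw [show |x| ^ 4 = x ^ 4 from by rw [← abs_pow, abs_of_nonneg (by positivity)],
      sq_abs]] at h
  rw [h, gauss_m4_Ioi hb]
  ring

open ProbabilityTheory
open scoped NNReal ENNReal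

lemma pdf_eq (s : ℝ≥0) (x : ℝ) :
    gaussianPDFReal 0 s x
      = (Real.sqrt (2 * π * s))⁻¹ * Real.exp (-((2 * (s:ℝ))⁻¹) * x ^ 2) := by
  rw [gaussianPDFReal]
  congr 1
  rw [sub_zero]
  congr 1
  rw [neg_div, neg_mul, neg_inj, div_eq_inv_mul, mul_comm]

lemma integrable_pow_gaussianReal (s : ℝ≥0) (n : ℕ) :
    Integrable (fun z : ℝ => z ^ n) (gaussianReal 0 s) := by
  rcases eq_or_ne s 0 with rfl | hs
  · rw [gaussianReal_zero_var]
    refine ⟨((measurable_id (α := ℝ)).pow_const n).aestronglyMeasurable, ?_⟩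
    rw [HasFiniteIntegral, lintegral_dirac]
    exact ENNReal.coe_lt_top
  · have hs' : (0:ℝ) < s := NNReal.coe_pos.mpr (pos_iff_ne_zero.mpr hs)
    have hb : (0:ℝ) < (2 * (s:ℝ))⁻¹ := by positivity
    rw [gaussianReal_of_var_ne_zero 0 hs, gaussianPDF_def]
    simp_rw [show ∀ x : ℝ, ENNReal.ofReal (gaussianPDFReal 0 s x)
      = ((Real.toNNReal (gaussianPDFReal 0 s x) : ℝ≥0) : ℝ≥0∞) from fun x => rfl]
    rw [integrable_withDensity_iff_integrable_smul
      ((measurable_gaussianPDFReal 0 s).real_toNNReal)]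
    have : (fun x : ℝ => (Real.toNNReal (gaussianPDFReal 0 s x)) • x ^ n)
        = fun x : ℝ => (Real.sqrt (2 * π * s))⁻¹ * (x ^ n * Real.exp (-((2 * (s:ℝ))⁻¹) * x ^ 2)) := by
      ext x
      rw [NNReal.smul_def, Real.coe_toNNReal _ (gaussianPDFReal_nonneg 0 s x),
        smul_eq_mul, pdf_eq]
      ring
    rw [this]
    have := integrable_rpow_mul_exp_neg_mul_sq hb
      (s := (n:ℝ)) (lt_of_lt_of_le neg_one_lt_zero (Nat.cast_nonneg n))
    simp only [pow_eq_rpow] at this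
    exact this.const_mul _

lemma m4_gaussianReal (s : ℝ≥0) :
    ∫ z : ℝ, z ^ 4 ∂(gaussianReal 0 s) = 3 * (s:ℝ) ^ 2 := by
  rcases eq_or_ne s 0 with rfl | hs
  · rw [gaussianReal_zero_var, integral_dirac]
    norm_num
  · have hs' : (0:ℝ) < s := NNReal.coe_pos.mpr (pos_iff_ne_zero.mpr hs)
    have hb : (0:ℝ) < (2 * (s:ℝ))⁻¹ := by positivity
    rw [gaussianReal_of_var_ne_zero 0 hs, gaussianPDF_def]
    simp_rw [show ∀ x : ℝ, ENNReal.ofReal (gaussianPDFReal 0 s x)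
      = ((Real.toNNReal (gaussianPDFReal 0 s x) : ℝ≥0) : ℝ≥0∞) from fun x => rfl]
    rw [integral_withDensity_eq_integral_smul
      ((measurable_gaussianPDFReal 0 s).real_toNNReal)]
    have heq : (fun x : ℝ => (Real.toNNReal (gaussianPDFReal 0 s x)) • x ^ 4)
        = fun x : ℝ => (Real.sqrt (2 * π * s))⁻¹ * (x ^ 4 * Real.exp (-((2 * (s:ℝ))⁻¹) * x ^ 2)) := by
      ext x
      rw [NNReal.smul_def, Real.coe_toNNReal _ (gaussianPDFReal_nonneg 0 s x),
        smul_eq_mul, pdf_eq]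
      ring
    rw [heq, MeasureTheory.integral_const_mul, gauss_m4 hb]
    have h1 : π / ((2 * (s:ℝ))⁻¹) = 2 * π * s := by field_simp
    have h2 : Real.sqrt (2 * π * s) ≠ 0 := by positivity
    rw [h1]
    field_simp
    ring

open Matrix

lemma moment4_transfer {Ω : Type*} [MeasurableSpace Ω] (P : Measure Ω) (Z : Ω → ℝ)
    (hZm : Measurable Z) (s : ℝ≥0) (h : Measure.map Z P = gaussianReal 0 s) :
    Integrable (fun ω => (Z ω) ^ 4) P ∧ ∫ ω, (Z ω) ^ 4 ∂P = 3 * (s:ℝ) ^ 2 := by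
  have hg : Integrable (fun z : ℝ => z ^ 4) (Measure.map Z P) := by
    rw [h]; exact integrable_pow_gaussianReal s 4
  constructor
  · exact (integrable_map_measure hg.1 hZm.aemeasurable).mp hg
  · rw [← integral_map hZm.aemeasurable hg.1, h, m4_gaussianReal]

/-- `X` is a centered Gaussian random vector with covariance matrix `S`:
by the Cramér–Wold device, this holds iff every linear functional `⟨u, X⟩` has the
one-dimensional centered Gaussian law with variance `uᵀ S u`. -/
def IsCenteredGaussianVec {Ω : Type*} [MeasurableSpace Ω] (P : Measure Ω) {d : ℕ}
    (S : Matrix (Fin d) (Fin d) ℝ) (X : Ω → Fin d → ℝ) : Prop :=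
  Measurable X ∧
    ∀ u : Fin d → ℝ, Measure.map (fun ω => u ⬝ᵥ X ω) P =
      gaussianReal 0 (Real.toNNReal (u ⬝ᵥ S.mulVec u))

/-- Explicit second-moment bound on the stochastic gradient
`g = (f(⟨w,x⟩) − f(⟨v_weak,x⟩)) f'(⟨w,x⟩) x` under spiked Gaussian data
`x ~ N(0, I + λvvᵀ)`: `E[‖g‖²] ≤ M₁⁴ (4d(1+λ) + 4λ(1+λ) + 8(1+λ)²)`. -/
theorem stmt7 {Ω : Type*} [MeasurableSpace Ω] (P : Measure Ω) [IsProbabilityMeasure P]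
    {d : ℕ} (lam : ℝ) (hlam : 0 ≤ lam)
    (v : Fin d → ℝ) (hv : v ⬝ᵥ v = 1)
    (S : Matrix (Fin d) (Fin d) ℝ) (hS : S = 1 + lam • vecMulVec v v)
    (X : Ω → Fin d → ℝ) (hX : IsCenteredGaussianVec P S X)
    (w vweak : Fin d → ℝ) (hw : w ⬝ᵥ w = 1) (hvw : vweak ⬝ᵥ vweak = 1)
    (f : ℝ → ℝ) (hf : Differentiable ℝ f) (M₁ : ℝ) (hM₁ : ∀ x, |deriv f x| ≤ M₁) :
    ∫ ω, ((f (w ⬝ᵥ X ω) - f (vweak ⬝ᵥ X ω)) * deriv f (w ⬝ᵥ X ω)) ^ 2 *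
        (X ω ⬝ᵥ X ω) ∂P ≤
      M₁ ^ 4 * (4 * d * (1 + lam) + 4 * lam * (1 + lam) + 8 * (1 + lam) ^ 2) := by
  have hM₁0 : 0 ≤ M₁ := le_trans (abs_nonneg _) (hM₁ 0)
  -- measurability of linear functionals
  have hdot : ∀ c : Fin d → ℝ, Measurable (fun ω => c ⬝ᵥ X ω) := by
    intro c
    simp only [dotProduct]
    exact Finset.measurable_sum _ fun i _ =>
      measurable_const.mul ((measurable_pi_apply i).comp hX.1)
  -- the quadratic form
  set q : (Fin d → ℝ) → ℝ := fun c => c ⬝ᵥ c + lam * (v ⬝ᵥ c) ^ 2 with hq_def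
  set B : (Fin d → ℝ) → (Fin d → ℝ) → ℝ :=
    fun a b => a ⬝ᵥ b + lam * (v ⬝ᵥ a) * (v ⬝ᵥ b) with hB_def
  have hq : ∀ c : Fin d → ℝ, c ⬝ᵥ S.mulVec c = q c := by
    intro c
    have h1 : vecMulVec v v *ᵥ c = fun i => v i * (v ⬝ᵥ c) := by
      ext i
      simp [Matrix.mulVec, vecMulVec_apply, dotProduct, Finset.mul_sum, mul_assoc]
    rw [hS, Matrix.add_mulVec, Matrix.one_mulVec, dotProduct_add, Matrix.smul_mulVec,
      dotProduct_smul, h1]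
    have h2 : (c ⬝ᵥ fun i => v i * (v ⬝ᵥ c)) = (v ⬝ᵥ c) ^ 2 := by
      simp only [dotProduct]
      rw [show (∑ x, c x * (v x * ∑ i, v i * c i)) = (∑ x, v x * c x) * (∑ i, v i * c i) from by
        rw [Finset.sum_mul]; exact Finset.sum_congr rfl fun x _ => by ring]
      ring
    rw [h2, smul_eq_mul]
  have hself : ∀ c : Fin d → ℝ, 0 ≤ c ⬝ᵥ c := fun c =>
    Finset.sum_nonneg fun i _ => mul_self_nonneg (c i)
  have hq0 : ∀ c : Fin d → ℝ, 0 ≤ q c := fun c =>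
    add_nonneg (hself c) (mul_nonneg hlam (sq_nonneg _))
  -- fourth moments
  have hm4 : ∀ c : Fin d → ℝ, Integrable (fun ω => (c ⬝ᵥ X ω) ^ 4) P ∧
      ∫ ω, (c ⬝ᵥ X ω) ^ 4 ∂P = 3 * (q c) ^ 2 := by
    intro c
    have h := moment4_transfer P (fun ω => c ⬝ᵥ X ω) (hdot c)
      (Real.toNNReal (c ⬝ᵥ S.mulVec c)) (hX.2 c)
    rw [Real.coe_toNNReal _ (by rw [hq c]; exact hq0 c), hq c] at h
    exact h
  -- Cramér–Wold polarization : mixed second moments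
  have hqadd : ∀ a b : Fin d → ℝ, q (a + b) = q a + 2 * B a b + q b := by
    intro a b
    simp only [hq_def, hB_def, dotProduct_add, add_dotProduct]
    rw [dotProduct_comm b a]
    ring
  have hqsub : ∀ a b : Fin d → ℝ, q (a - b) = q a - 2 * B a b + q b := by
    intro a b
    simp only [hq_def, hB_def, dotProduct_sub, sub_dotProduct]
    rw [dotProduct_comm b a]
    ring
  have hKpt : ∀ (a b : Fin d → ℝ) (ω : Ω), (a ⬝ᵥ X ω) ^ 2 * (b ⬝ᵥ X ω) ^ 2 =
      (((a + b) ⬝ᵥ X ω) ^ 4 + ((a - b) ⬝ᵥ X ω) ^ 4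
        - 2 * (a ⬝ᵥ X ω) ^ 4 - 2 * (b ⬝ᵥ X ω) ^ 4) / 12 := by
    intro a b ω
    simp only [add_dotProduct, sub_dotProduct]
    ring
  have hKint : ∀ a b : Fin d → ℝ, Integrable (fun ω => (a ⬝ᵥ X ω) ^ 2 * (b ⬝ᵥ X ω) ^ 2) P := by
    intro a b
    have : (fun ω => (a ⬝ᵥ X ω) ^ 2 * (b ⬝ᵥ X ω) ^ 2)
        = fun ω => (((a + b) ⬝ᵥ X ω) ^ 4 + ((a - b) ⬝ᵥ X ω) ^ 4
          - 2 * (a ⬝ᵥ X ω) ^ 4 - 2 * (b ⬝ᵥ X ω) ^ 4) / 12 := funext fun ω => hKpt a b ω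
    rw [this]
    exact ((((hm4 (a+b)).1.add (hm4 (a-b)).1).sub ((hm4 a).1.const_mul 2)).sub
      ((hm4 b).1.const_mul 2)).div_const 12
  have hK : ∀ a b : Fin d → ℝ, ∫ ω, (a ⬝ᵥ X ω) ^ 2 * (b ⬝ᵥ X ω) ^ 2 ∂P
      = q a * q b + 2 * (B a b) ^ 2 := by
    intro a b
    rw [show (fun ω => (a ⬝ᵥ X ω) ^ 2 * (b ⬝ᵥ X ω) ^ 2)
        = fun ω => (((a + b) ⬝ᵥ X ω) ^ 4 + ((a - b) ⬝ᵥ X ω) ^ 4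
          - 2 * (a ⬝ᵥ X ω) ^ 4 - 2 * (b ⬝ᵥ X ω) ^ 4) / 12 from funext fun ω => hKpt a b ω]
    have I1 := (hm4 (a+b)).1
    have I2 := (hm4 (a-b)).1
    have I3 := (hm4 a).1.const_mul 2
    have I4 := (hm4 b).1.const_mul 2
    have e1 : ∫ ω, (((a + b) ⬝ᵥ X ω) ^ 4 + ((a - b) ⬝ᵥ X ω) ^ 4
          - 2 * (a ⬝ᵥ X ω) ^ 4 - 2 * (b ⬝ᵥ X ω) ^ 4) ∂P
        = (∫ ω, ((a + b) ⬝ᵥ X ω) ^ 4 ∂P) + (∫ ω, ((a - b) ⬝ᵥ X ω) ^ 4 ∂P)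
          - 2 * (∫ ω, (a ⬝ᵥ X ω) ^ 4 ∂P) - 2 * (∫ ω, (b ⬝ᵥ X ω) ^ 4 ∂P) := by
      have t1 := MeasureTheory.integral_add I1 I2
      have t2 := MeasureTheory.integral_sub (I1.add I2) I3
      have t3 := MeasureTheory.integral_sub ((I1.add I2).sub I3) I4
      simp only [Pi.add_apply, Pi.sub_apply] at t1 t2 t3
      rw [t3, t2, t1, MeasureTheory.integral_const_mul, MeasureTheory.integral_const_mul]
    rw [MeasureTheory.integral_div, e1, (hm4 (a+b)).2, (hm4 (a-b)).2, (hm4 a).2, (hm4 b).2,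
      hqadd, hqsub]
    ring
  -- the sum over coordinates
  set u : Fin d → ℝ := w - vweak with hu_def
  have hXX : ∀ ω, X ω ⬝ᵥ X ω = ∑ i, ((Pi.single i (1:ℝ)) ⬝ᵥ X ω) ^ 2 := by
    intro ω
    have h1 : ∀ i, (Pi.single i (1:ℝ)) ⬝ᵥ X ω = X ω i := fun i => by
      rw [single_dotProduct, one_mul]
    simp_rw [h1]
    simp [dotProduct, pow_two]
  have hFeq : (fun ω => (u ⬝ᵥ X ω) ^ 2 * (X ω ⬝ᵥ X ω))
      = fun ω => ∑ i, (u ⬝ᵥ X ω) ^ 2 * ((Pi.single i (1:ℝ)) ⬝ᵥ X ω) ^ 2 :=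
    funext fun ω => by rw [hXX ω, Finset.mul_sum]
  have hFint : Integrable (fun ω => (u ⬝ᵥ X ω) ^ 2 * (X ω ⬝ᵥ X ω)) P := by
    rw [hFeq]
    exact integrable_finset_sum _ fun i _ => hKint u _
  have hFval : ∫ ω, (u ⬝ᵥ X ω) ^ 2 * (X ω ⬝ᵥ X ω) ∂P
      = ∑ i, (q u * q (Pi.single i (1:ℝ)) + 2 * (B u (Pi.single i (1:ℝ))) ^ 2) := by
    rw [hFeq, MeasureTheory.integral_finset_sum _ fun i _ => hKint u _]
    exact Finset.sum_congr rfl fun i _ => hK u _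
  -- pointwise bound
  have hmvt : ∀ p r : ℝ, |f p - f r| ≤ M₁ * |p - r| := by
    intro p r
    have h := Convex.norm_image_sub_le_of_norm_hasDerivWithin_le (s := Set.univ)
      (f' := deriv f) (fun x _ => (hf x).hasDerivAt.hasDerivWithinAt)
      (fun x _ => by rw [Real.norm_eq_abs]; exact hM₁ x) convex_univ
      (Set.mem_univ r) (Set.mem_univ p)
    simpa [Real.norm_eq_abs] using h
  have hpt : ∀ ω, ((f (w ⬝ᵥ X ω) - f (vweak ⬝ᵥ X ω)) * deriv f (w ⬝ᵥ X ω)) ^ 2 *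
      (X ω ⬝ᵥ X ω) ≤ M₁ ^ 4 * ((u ⬝ᵥ X ω) ^ 2 * (X ω ⬝ᵥ X ω)) := by
    intro ω
    have hs0 : 0 ≤ X ω ⬝ᵥ X ω := hself _
    have habs := hmvt (w ⬝ᵥ X ω) (vweak ⬝ᵥ X ω)
    have h1 : (f (w ⬝ᵥ X ω) - f (vweak ⬝ᵥ X ω)) ^ 2
        ≤ M₁ ^ 2 * (w ⬝ᵥ X ω - vweak ⬝ᵥ X ω) ^ 2 := by
      have h := mul_self_le_mul_self (abs_nonneg _) habs
      nlinarith [sq_abs (f (w ⬝ᵥ X ω) - f (vweak ⬝ᵥ X ω)), sq_abs (w ⬝ᵥ X ω - vweak ⬝ᵥ X ω)]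
    have h2 : (deriv f (w ⬝ᵥ X ω)) ^ 2 ≤ M₁ ^ 2 := by
      nlinarith [hM₁ (w ⬝ᵥ X ω), abs_nonneg (deriv f (w ⬝ᵥ X ω)), sq_abs (deriv f (w ⬝ᵥ X ω))]
    have hud : w ⬝ᵥ X ω - vweak ⬝ᵥ X ω = u ⬝ᵥ X ω := by rw [hu_def, sub_dotProduct]
    have hmain : ((f (w ⬝ᵥ X ω) - f (vweak ⬝ᵥ X ω)) * deriv f (w ⬝ᵥ X ω)) ^ 2
        ≤ M₁ ^ 2 * (w ⬝ᵥ X ω - vweak ⬝ᵥ X ω) ^ 2 * M₁ ^ 2 := by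
      rw [mul_pow]
      exact mul_le_mul h1 h2 (sq_nonneg _) (by positivity)
    calc ((f (w ⬝ᵥ X ω) - f (vweak ⬝ᵥ X ω)) * deriv f (w ⬝ᵥ X ω)) ^ 2 * (X ω ⬝ᵥ X ω)
        ≤ (M₁ ^ 2 * (w ⬝ᵥ X ω - vweak ⬝ᵥ X ω) ^ 2 * M₁ ^ 2) * (X ω ⬝ᵥ X ω) :=
          mul_le_mul_of_nonneg_right hmain hs0
      _ = M₁ ^ 4 * ((u ⬝ᵥ X ω) ^ 2 * (X ω ⬝ᵥ X ω)) := by rw [← hud]; ring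
  -- integral comparison
  have hmono : ∫ ω, ((f (w ⬝ᵥ X ω) - f (vweak ⬝ᵥ X ω)) * deriv f (w ⬝ᵥ X ω)) ^ 2 *
        (X ω ⬝ᵥ X ω) ∂P ≤ ∫ ω, M₁ ^ 4 * ((u ⬝ᵥ X ω) ^ 2 * (X ω ⬝ᵥ X ω)) ∂P := by
    refine integral_mono_of_nonneg (Filter.Eventually.of_forall fun ω => ?_)
      (hFint.const_mul _) (Filter.Eventually.of_forall hpt)
    exact mul_nonneg (sq_nonneg _) (hself _)
  rw [MeasureTheory.integral_const_mul, hFval] at hmono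
  refine hmono.trans ?_
  -- evaluate the sum
  have hqe : ∀ i, q (Pi.single i (1:ℝ)) = 1 + lam * (v i) ^ 2 := by
    intro i
    simp only [hq_def, dotProduct_single, single_dotProduct, one_mul, mul_one, Pi.single_eq_same]
  have hBe : ∀ i, B u (Pi.single i (1:ℝ)) = u i + lam * (v ⬝ᵥ u) * v i := by
    intro i
    simp only [hB_def, dotProduct_single, mul_one]
  have hsumv : ∑ i, (v i) ^ 2 = 1 := by
    rw [← hv]; simp [dotProduct, pow_two]
  have hsumu : ∑ i, u i * u i = u ⬝ᵥ u := rfl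
  have hsumvu : ∑ i, v i * u i = v ⬝ᵥ u := rfl
  set t : ℝ := u ⬝ᵥ u with ht_def
  set c : ℝ := v ⬝ᵥ u with hc_def
  have hsum : ∑ i, (q u * q (Pi.single i (1:ℝ)) + 2 * (B u (Pi.single i (1:ℝ))) ^ 2)
      = q u * ((d:ℝ) + lam) + 2 * (t + 2 * lam * c ^ 2 + lam ^ 2 * c ^ 2) := by
    simp_rw [hqe, hBe]
    rw [Finset.sum_add_distrib, ← Finset.mul_sum]
    congr 1
    · congr 1
      rw [Finset.sum_add_distrib, Finset.sum_const, ← Finset.mul_sum, hsumv]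
      simp [Finset.card_univ]
    · rw [← Finset.mul_sum]
      congr 1
      calc ∑ i, (u i + lam * c * v i) ^ 2
          = ∑ i, (u i * u i + ((2 * (lam * c)) * (v i * u i) + (lam * c) ^ 2 * (v i) ^ 2)) :=
            Finset.sum_congr rfl fun i _ => by ring
        _ = t + 2 * lam * c ^ 2 + lam ^ 2 * c ^ 2 := by
            rw [Finset.sum_add_distrib, Finset.sum_add_distrib, ← Finset.mul_sum, ← Finset.mul_sum,
              hsumv, hsumu, hsumvu]
            ring
  rw [hsum]
  -- Cauchy--Schwarz bounds
  have hcs : ∀ a b : Fin d → ℝ, (a ⬝ᵥ b) ^ 2 ≤ (a ⬝ᵥ a) * (b ⬝ᵥ b) := by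
    intro a b
    have h := Finset.sum_mul_sq_le_sq_mul_sq Finset.univ a b
    simpa [dotProduct, pow_two] using h
  have ht0 : 0 ≤ t := hself u
  have ht4 : t ≤ 4 := by
    have hwv : (w ⬝ᵥ vweak) ^ 2 ≤ 1 := by
      have := hcs w vweak; rwa [hw, hvw, mul_one] at this
    have hexp : t = 2 - 2 * (w ⬝ᵥ vweak) := by
      rw [ht_def, hu_def]
      simp only [sub_dotProduct, dotProduct_sub]
      rw [dotProduct_comm vweak w, hw, hvw]
      ring
    nlinarith [hwv]
  have hc2 : c ^ 2 ≤ t := by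
    have := hcs v u; rwa [hv, one_mul] at this
  have hc4 : c ^ 2 ≤ 4 := hc2.trans ht4
  have hquval : q u = t + lam * c ^ 2 := rfl
  rw [hquval]
  have hM4 : (0:ℝ) ≤ M₁ ^ 4 := by positivity
  apply mul_le_mul_of_nonneg_left _ hM4
  have hd0 : (0:ℝ) ≤ (d:ℝ) := Nat.cast_nonneg d
  nlinarith [mul_nonneg (sub_nonneg.2 ht4) hd0, mul_nonneg (sub_nonneg.2 ht4) hlam,
    mul_nonneg (mul_nonneg (sub_nonneg.2 hc4) hlam) hd0,
    mul_nonneg (sub_nonneg.2 hc4) hlam,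
    mul_nonneg (sub_nonneg.2 hc4) (mul_nonneg hlam hlam),
    sub_nonneg.2 ht4, sub_nonneg.2 hc4, sq_nonneg c]
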